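/- Let K ≥ 2, let n_1, …, n_K ≥ 2, set n = n_1 + ⋯ + n_K, and for each k let L_k be an n_k×n_k real symmetric positive semidefinite matrix with L_k·1_{n_k} = 0. Let p ≥ 0. Let X ∈ ℝ^{n×(K−1)} satisfy Xᵀ X = I_{K−1}, write X = [X_1ᵀ, …, X_Kᵀ]ᵀ with blocks X_k ∈ ℝ^{n_k×(K−1)}, and assume X_kᵀ 1_{n_k} = 0 for every k. Then Σ_{k=1}^{K} trace(X_kᵀ L_k X_k) + p·Σ_{k=1}^{K} (n − n_k)·trace(X_kᵀ X_k) ≥ (K−1)·( min_{k} λ_2(L_k) + p·(n − max_{k} n_k) ), where λ_2(L_k) denotes the second-smallest eigenvalue of L_k. -/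

import Mathlib

open Matrix BigOperators

/-- The `k`-th row block of a matrix whose rows are indexed by the sigma type
`(k : Fin K) × Fin (nk k)`. -/
def blockOf {K d : ℕ} {nk : Fin K → ℕ}
    (X : Matrix ((k : Fin K) × Fin (nk k)) (Fin d) ℝ) (k : Fin K) :
    Matrix (Fin (nk k)) (Fin d) ℝ :=
  Matrix.of fun i j => X ⟨k, i⟩ j

lemma quad_form {n : ℕ} (L U : Matrix (Fin n) (Fin n) ℝ) (μ : Fin n → ℝ)
    (hdec : L = U * Matrix.diagonal μ * Uᵀ) (v : Fin n → ℝ) :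
    v ⬝ᵥ L.mulVec v = ∑ i, μ i * (Uᵀ.mulVec v i)^2 := by
  subst hdec
  rw [← Matrix.mulVec_mulVec, ← Matrix.mulVec_mulVec, Matrix.dotProduct_mulVec,
    ← Matrix.mulVec_transpose]
  simp [dotProduct, Matrix.mulVec_diagonal, mul_comm, sq, mul_assoc, mul_left_comm]

lemma norm_form {n : ℕ} (U : Matrix (Fin n) (Fin n) ℝ) (hU : Uᵀ * U = 1) (v : Fin n → ℝ) :
    v ⬝ᵥ v = ∑ i, (Uᵀ.mulVec v i)^2 := by
  have h1 : U * Uᵀ = 1 := mul_eq_one_comm.mp hU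
  have : v ⬝ᵥ (U * Uᵀ).mulVec v = ∑ i, (Uᵀ.mulVec v i)^2 := by
    rw [← Matrix.mulVec_mulVec, Matrix.dotProduct_mulVec, ← Matrix.mulVec_transpose]
    simp [dotProduct, sq]
  rw [h1] at this
  simpa using this

lemma mu_nonneg {n : ℕ} (L U : Matrix (Fin n) (Fin n) ℝ) (μ : Fin n → ℝ)
    (hPSD : L.PosSemidef) (hU : Uᵀ * U = 1)
    (hdec : L = U * Matrix.diagonal μ * Uᵀ) (i : Fin n) : 0 ≤ μ i := by
  have h := hPSD.dotProduct_mulVec_nonneg (U.mulVec (Pi.single i 1))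
  simp only [star_trivial] at h
  rw [quad_form L U μ hdec] at h
  have hc : Uᵀ.mulVec (U.mulVec (Pi.single i 1)) = Pi.single i 1 := by
    rw [Matrix.mulVec_mulVec, hU, Matrix.one_mulVec]
  rw [hc] at h
  simpa [Pi.single_apply, Finset.sum_ite_eq'] using h

lemma key_bound {n : ℕ} (hn : 2 ≤ n) (L U : Matrix (Fin n) (Fin n) ℝ) (μ : Fin n → ℝ)
    (hPSD : L.PosSemidef) (hL1 : L.mulVec (fun _ => (1:ℝ)) = 0)
    (hμ : Monotone μ) (hU : Uᵀ * U = 1)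
    (hdec : L = U * Matrix.diagonal μ * Uᵀ)
    (v : Fin n → ℝ) (hv : ∑ i, v i = 0) :
    μ ⟨1, by omega⟩ * ∑ i, v i ^ 2 ≤ v ⬝ᵥ L.mulVec v := by
  have hUU : U * Uᵀ = 1 := mul_eq_one_comm.mp hU
  set i0 : Fin n := ⟨0, by omega⟩
  set i1 : Fin n := ⟨1, by omega⟩
  set c : Fin n → ℝ := Uᵀ.mulVec v with hc
  have hq : v ⬝ᵥ L.mulVec v = ∑ i, μ i * c i ^ 2 := quad_form L U μ hdec v
  have hnrm : ∑ i, v i ^ 2 = ∑ i, c i ^ 2 := by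
    have := norm_form U hU v
    simpa [dotProduct, sq] using this
  have hmono : ∀ i : Fin n, i ≠ i0 → μ i1 ≤ μ i := by
    intro i hi
    have hv' : i.val ≠ 0 := fun h => hi (Fin.ext h)
    exact hμ (by rw [Fin.le_def]; show 1 ≤ i.val; omega)
  rw [hq, hnrm]
  by_cases hcase : μ i1 ≤ μ i0
  · rw [Finset.mul_sum]
    refine Finset.sum_le_sum fun i _ => ?_
    have : μ i1 ≤ μ i := by
      by_cases h : i = i0
      · exact h ▸ hcase
      · exact hmono i h
    exact mul_le_mul_of_nonneg_right this (sq_nonneg _)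
  · push_neg at hcase
    -- μ i0 < μ i1 : kernel is spanned by 1, so c i0 = 0
    set d : Fin n → ℝ := Uᵀ.mulVec (fun _ => (1:ℝ)) with hd
    have hq1 : (0:ℝ) = ∑ i, μ i * d i ^ 2 := by
      have := quad_form L U μ hdec (fun _ => (1:ℝ))
      rw [hL1] at this
      simpa using this
    have hterm : ∀ i : Fin n, i ∈ Finset.univ → μ i * d i ^ 2 = 0 := by
      apply (Finset.sum_eq_zero_iff_of_nonneg ?_).mp hq1.symm
      intro i _
      exact mul_nonneg (mu_nonneg L U μ hPSD hU hdec i) (sq_nonneg _)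
    have hdzero : ∀ i : Fin n, i ≠ i0 → d i = 0 := by
      intro i hi
      have hpos : 0 < μ i := by
        have h0 := mu_nonneg L U μ hPSD hU hdec i0
        have := hmono i hi
        linarith
      have := hterm i (Finset.mem_univ i)
      have := (mul_eq_zero.mp this).resolve_left (ne_of_gt hpos)
      exact pow_eq_zero_iff (n := 2) (by norm_num) |>.mp this
    have h1 : U.mulVec d = fun _ => (1:ℝ) := by
      rw [hd, Matrix.mulVec_mulVec, hUU, Matrix.one_mulVec]
    have hd0 : d i0 ≠ 0 := by
      intro h0
      have hdall : d = 0 := funext fun i => by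
        by_cases h : i = i0
        · simpa [h] using h0
        · exact hdzero i h
      rw [hdall, Matrix.mulVec_zero] at h1
      exact one_ne_zero (congrFun h1.symm i0)
    have hcd : c i0 * d i0 = 0 := by
      have hdot : v ⬝ᵥ U.mulVec d = c ⬝ᵥ d := by
        rw [Matrix.dotProduct_mulVec, ← Matrix.mulVec_transpose]
      rw [h1] at hdot
      have hv0 : v ⬝ᵥ (fun _ => (1:ℝ)) = 0 := by
        simpa [dotProduct] using hv
      have hsum : c ⬝ᵥ d = c i0 * d i0 := by
        rw [dotProduct]
        rw [Finset.sum_eq_single i0]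
        · intro i _ hi
          rw [hdzero i hi, mul_zero]
        · intro h; exact absurd (Finset.mem_univ i0) h
      rw [hv0] at hdot
      rw [← hsum, ← hdot]
    have hc0 : c i0 = 0 := (mul_eq_zero.mp hcd).resolve_right hd0
    rw [Finset.mul_sum]
    refine Finset.sum_le_sum fun i _ => ?_
    by_cases h : i = i0
    · rw [h, hc0]
      simp
    · exact mul_le_mul_of_nonneg_right (hmono i h) (sq_nonneg _)

lemma myTraceConj {m d : Type*} [Fintype m] [Fintype d]
    (L : Matrix m m ℝ) (A : Matrix m d ℝ) :
    (Aᵀ * L * A).trace = ∑ j, (fun i => A i j) ⬝ᵥ L.mulVec (fun i => A i j) := by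
  simp only [Matrix.trace, Matrix.diag, Matrix.mul_apply, Matrix.transpose_apply,
    dotProduct, Matrix.mulVec, Finset.sum_mul, Finset.mul_sum]
  refine Finset.sum_congr rfl fun j _ => ?_
  rw [Finset.sum_comm]
  refine Finset.sum_congr rfl fun i _ => Finset.sum_congr rfl fun i' _ => by ring

lemma trace_gram {m d : Type*} [Fintype m] [Fintype d]
    (A : Matrix m d ℝ) :
    (Aᵀ * A).trace = ∑ j, ∑ i, A i j ^ 2 := by
  simp only [Matrix.trace, Matrix.diag, Matrix.mul_apply, Matrix.transpose_apply, sq]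

lemma trace_gram_nonneg {m d : Type*} [Fintype m] [Fintype d]
    (A : Matrix m d ℝ) : 0 ≤ (Aᵀ * A).trace := by
  rw [trace_gram]
  exact Finset.sum_nonneg fun j _ => Finset.sum_nonneg fun i _ => sq_nonneg _

lemma key_trace {n d : ℕ} (hn : 2 ≤ n) (L U : Matrix (Fin n) (Fin n) ℝ) (μ : Fin n → ℝ)
    (hPSD : L.PosSemidef) (hL1 : L.mulVec (fun _ => (1:ℝ)) = 0)
    (hμ : Monotone μ) (hU : Uᵀ * U = 1)
    (hdec : L = U * Matrix.diagonal μ * Uᵀ)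
    (A : Matrix (Fin n) (Fin d) ℝ) (hA : ∀ j, ∑ i, A i j = 0) :
    μ ⟨1, by omega⟩ * (Aᵀ * A).trace ≤ (Aᵀ * L * A).trace := by
  rw [myTraceConj, trace_gram, Finset.mul_sum]
  refine Finset.sum_le_sum fun j _ => ?_
  exact key_bound hn L U μ hPSD hL1 hμ hU hdec (fun i => A i j) (hA j)

/-- Deterministic lower bound (Case 2 of Theorem 2): for cluster Laplacians `Lₖ`
(symmetric PSD, `Lₖ 1 = 0`, with monotone eigenvalue listing `μ k` via an orthogonal
diagonalization) and `X ∈ ℝ^{n×(K-1)}` with orthonormal columns and centered blocks,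
`∑ₖ trace(Xₖᵀ Lₖ Xₖ) + p·∑ₖ (n - nₖ)·trace(Xₖᵀ Xₖ)
  ≥ (K-1)·(minₖ λ₂(Lₖ) + p·(n - maxₖ nₖ))`. -/
theorem stmt8 (K : ℕ) (hK : 2 ≤ K) (nk : Fin K → ℕ) (hnk : ∀ k, 2 ≤ nk k)
    (L : (k : Fin K) → Matrix (Fin (nk k)) (Fin (nk k)) ℝ)
    (hPSD : ∀ k, (L k).PosSemidef)
    (hL1 : ∀ k, (L k).mulVec (fun _ => (1 : ℝ)) = 0)
    (μ : (k : Fin K) → Fin (nk k) → ℝ) (hμ : ∀ k, Monotone (μ k))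
    (U : (k : Fin K) → Matrix (Fin (nk k)) (Fin (nk k)) ℝ)
    (hU : ∀ k, (U k)ᵀ * U k = 1)
    (hdec : ∀ k, L k = U k * Matrix.diagonal (μ k) * (U k)ᵀ)
    (p : ℝ) (hp : 0 ≤ p)
    (X : Matrix ((k : Fin K) × Fin (nk k)) (Fin (K - 1)) ℝ)
    (hX : Xᵀ * X = 1)
    (hXcenter : ∀ k j, ∑ i : Fin (nk k), X ⟨k, i⟩ j = 0) :
    ((K : ℝ) - 1) *
        ((Finset.univ.inf'
            (Finset.univ_nonempty_iff.mpr (Fin.pos_iff_nonempty.mp (by omega)))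
            (fun k => μ k ⟨1, by have := hnk k; omega⟩))
          + p * (((∑ l : Fin K, nk l : ℕ) : ℝ) -
              (Finset.univ.sup'
                (Finset.univ_nonempty_iff.mpr (Fin.pos_iff_nonempty.mp (by omega)))
                nk : ℕ)))
      ≤ ∑ k : Fin K, ((blockOf X k)ᵀ * L k * blockOf X k).trace
        + p * ∑ k : Fin K, (((∑ l : Fin K, nk l : ℕ) : ℝ) - (nk k : ℕ))
            * ((blockOf X k)ᵀ * blockOf X k).trace := by
  have h1k : ∀ k : Fin K, (1:ℕ) < nk k := fun k => by have := hnk k; omega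
  have hne : (Finset.univ : Finset (Fin K)).Nonempty := ⟨⟨0, by omega⟩, Finset.mem_univ _⟩
  show ((K : ℝ) - 1) *
        ((Finset.univ.inf' hne (fun k => μ k ⟨1, h1k k⟩))
          + p * (((∑ l : Fin K, nk l : ℕ) : ℝ) - (Finset.univ.sup' hne nk : ℕ)))
      ≤ ∑ k : Fin K, ((blockOf X k)ᵀ * L k * blockOf X k).trace
        + p * ∑ k : Fin K, (((∑ l : Fin K, nk l : ℕ) : ℝ) - (nk k : ℕ))
            * ((blockOf X k)ᵀ * blockOf X k).trace
  set m := Finset.univ.inf' hne (fun k => μ k ⟨1, h1k k⟩) with hm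
  set M := Finset.univ.sup' hne nk with hM
  set N : ℝ := ((∑ l : Fin K, nk l : ℕ) : ℝ) with hN
  set t : Fin K → ℝ := fun k => ((blockOf X k)ᵀ * blockOf X k).trace with ht
  -- block columns are centered
  have hbc : ∀ k j, ∑ i, blockOf X k i j = 0 := fun k j => hXcenter k j
  -- per-cluster spectral bound
  have hk : ∀ k, μ k ⟨1, h1k k⟩ * t k ≤ ((blockOf X k)ᵀ * L k * blockOf X k).trace :=
    fun k => key_trace (hnk k) (L k) (U k) (μ k) (hPSD k) (hL1 k) (hμ k) (hU k)
      (hdec k) (blockOf X k) (hbc k)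
  have htnn : ∀ k, 0 ≤ t k := fun k => trace_gram_nonneg _
  have hmle : ∀ k, m ≤ μ k ⟨1, h1k k⟩ := fun k =>
    Finset.inf'_le _ (Finset.mem_univ k)
  have hmt : ∀ k, m * t k ≤ ((blockOf X k)ᵀ * L k * blockOf X k).trace := fun k =>
    le_trans (mul_le_mul_of_nonneg_right (hmle k) (htnn k)) (hk k)
  -- sum of t is K - 1
  have hsum_t : ∑ k, t k = (K : ℝ) - 1 := by
    have h1 : ∑ k, t k = (Xᵀ * X).trace := by
      rw [trace_gram]
      simp only [ht, trace_gram, blockOf, Matrix.of_apply]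
      rw [Finset.sum_comm]
      refine Finset.sum_congr rfl fun j _ => ?_
      rw [← Finset.univ_sigma_univ, Finset.sum_sigma]
    rw [h1, hX, Matrix.trace_one]
    simp only [Fintype.card_fin]
    rw [Nat.cast_sub (by omega), Nat.cast_one]
  -- bound 1
  have hb1 : m * ((K:ℝ) - 1) ≤ ∑ k, ((blockOf X k)ᵀ * L k * blockOf X k).trace := by
    rw [← hsum_t, Finset.mul_sum]
    exact Finset.sum_le_sum fun k _ => hmt k
  -- bound 2
  have hnkM : ∀ k, (nk k : ℝ) ≤ (M : ℕ) := fun k => by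
    exact_mod_cast Nat.cast_le.mpr (Finset.le_sup' nk (Finset.mem_univ k))
  have hb2 : (N - (M:ℕ)) * ((K:ℝ) - 1) ≤ ∑ k, (N - (nk k : ℕ)) * t k := by
    rw [← hsum_t, Finset.mul_sum]
    refine Finset.sum_le_sum fun k _ => ?_
    exact mul_le_mul_of_nonneg_right (by have := hnkM k; linarith) (htnn k)
  have hb2' : p * ((N - (M:ℕ)) * ((K:ℝ) - 1)) ≤ p * ∑ k, (N - (nk k : ℕ)) * t k :=
    mul_le_mul_of_nonneg_left hb2 hp
  have expand : ((K:ℝ) - 1) * (m + p * (N - (M:ℕ)))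
      = m * ((K:ℝ) - 1) + p * ((N - (M:ℕ)) * ((K:ℝ) - 1)) := by ring
  rw [expand]
  exact add_le_add hb1 hb2'
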